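/- arXiv:1602.08330 — 2 statements merged into one kernel-verified Lean document; each statement's English description precedes it below -/
import Mathlib

section
/- Distinctness of quadric invariants: suppose μ₁,...,μ_p and their inverses μ₁⁻¹,...,μ_p⁻¹ are 2p distinct complex numbers, where for elliptic indices e the number μ_e > 1 is real, for hyperbolic indices h we have |μ_h| = 1 with arg λ_h ∈ (0, π/2) for λ_h² = μ_h, and for complex indices s, |μ_s| > 1 with arg λ_s ∈ (0, π/2). Define γ_j via γ_j = 1/(λ_j + λ_j⁻¹) for j = e, h (with λ_e > 1 real, |λ_h| = 1), and γ_s by γ_s⁻¹ = 1 + conj(λ_s)², γ_{s+s_*} = 1 − conj(γ_s). Then the p numbers γ_e², γ_h², conj(γ_s)·γ_{s+s_*}, γ_s·conj(γ_{s+s_*}) are pairwise distinct. -/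
open Complex

lemma inv_mul_helper (m : ℂ) (hm : (1 : ℂ) + m ≠ 0) :
    (1 + m)⁻¹ * (1 - (1 + m)⁻¹) = m / (1 + m) ^ 2 := by
  rw [eq_div_iff (pow_ne_zero 2 hm)]
  have h2 : (1 + m)⁻¹ * (1 + m) = 1 := inv_mul_cancel₀ hm
  linear_combination ((1 + m) - ((1 + m)⁻¹ * (1 + m) + 1)) * h2

lemma key_quad (a b : ℂ) (h : a * (1 + b)^2 = b * (1 + a)^2) : a = b ∨ a * b = 1 := by
  have h2 : (a - b) * (1 - a * b) = 0 := by linear_combination h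
  rcases mul_eq_zero.mp h2 with h3 | h3
  · exact Or.inl (sub_eq_zero.mp h3)
  · right; linear_combination -h3

/-- Distinctness of quadric invariants: with `e` elliptic, `h` hyperbolic indices and
`s` complex index-pairs (`p = e + h + 2s`), if the `2p` eigenvalues
`μ₁,...,μ_p, μ₁⁻¹,...,μ_p⁻¹` are distinct, then the `p` numbers
`γ_e², γ_h², conj(γ_s)·γ_{s+s_*}, γ_s·conj(γ_{s+s_*})` are pairwise distinct. -/
theorem stmt_12 (e h s p : ℕ) (hp : p = e + h + 2 * s)
    (lam mu gam G : ℕ → ℂ)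
    (hmulam : ∀ i < p, mu i = (lam i) ^ 2)
    -- the 2p numbers μ_i, μ_i⁻¹ are distinct
    (hmu_inj : ∀ i < p, ∀ j < p, mu i = mu j → i = j)
    (hmu_inv : ∀ i < p, ∀ j < p, mu i ≠ (mu j)⁻¹)
    -- elliptic: λ_e real, λ_e > 1 (so μ_e > 1 is real)
    (hell : ∀ i < e, (lam i).im = 0 ∧ 1 < (lam i).re)
    -- hyperbolic: |λ_h| = 1 (so |μ_h| = 1), arg λ_h ∈ (0, π/2)
    (hhyp : ∀ i, e ≤ i → i < e + h →
      ‖lam i‖ = 1 ∧ 0 < (lam i).arg ∧ (lam i).arg < Real.pi / 2)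
    -- complex: |λ_s| > 1 (so |μ_s| > 1), arg λ_s ∈ (0, π/2), λ_{s+s_*} = conj(λ_s)⁻¹
    (hcpl : ∀ i, e + h ≤ i → i < e + h + s →
      1 < ‖lam i‖ ∧ 0 < (lam i).arg ∧ (lam i).arg < Real.pi / 2 ∧
      lam (i + s) = ((starRingEnd ℂ) (lam i))⁻¹)
    -- γ_j = 1/(λ_j + λ_j⁻¹) for elliptic and hyperbolic indices
    (hgam_eh : ∀ i < e + h, gam i = (lam i + (lam i)⁻¹)⁻¹)
    -- γ_s⁻¹ = 1 + conj(λ_s)², γ_{s+s_*} = 1 − conj(γ_s)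
    (hgam_s : ∀ i, e + h ≤ i → i < e + h + s →
      gam i = (1 + ((starRingEnd ℂ) (lam i)) ^ 2)⁻¹ ∧
      gam (i + s) = 1 - (starRingEnd ℂ) (gam i))
    -- the p invariants
    (hG_eh : ∀ i < e + h, G i = (gam i) ^ 2)
    (hG_s : ∀ i, e + h ≤ i → i < e + h + s →
      G i = (starRingEnd ℂ) (gam i) * gam (i + s) ∧
      G (i + s) = gam i * (starRingEnd ℂ) (gam (i + s))) :
    ∀ i < p, ∀ j < p, G i = G j → i = j := by
  -- μ_i ≠ 0
  have hne0 : ∀ i < p, mu i ≠ 0 := by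
    intro i hi h0
    exact hmu_inv i hi i hi (by rw [h0, inv_zero])
  -- 1 + μ_i ≠ 0
  have hne1 : ∀ i < p, (1 : ℂ) + mu i ≠ 0 := by
    intro i hi hcon
    have hm : mu i = -1 := by linear_combination hcon
    exact hmu_inv i hi i hi (by rw [hm]; norm_num)
  have hlne : ∀ i < p, lam i ≠ 0 := by
    intro i hi hl
    exact hne0 i hi (by rw [hmulam i hi, hl]; ring)
  -- key formula: G i = μ_i / (1 + μ_i)^2
  have hGf : ∀ i < p, G i = mu i / (1 + mu i) ^ 2 := by
    intro i hi
    rcases lt_or_ge i (e + h) with hieh | hieh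
    · -- elliptic/hyperbolic
      rw [hG_eh i hieh, hgam_eh i hieh, hmulam i hi]
      have hl := hlne i hi
      have h1 : (1 : ℂ) + lam i ^ 2 ≠ 0 := by rw [← hmulam i hi]; exact hne1 i hi
      have hsum : lam i + (lam i)⁻¹ = (1 + lam i ^ 2) / lam i := by
        field_simp; ring
      rw [hsum, inv_div, div_pow]
    · rcases lt_or_ge i (e + h + s) with his | his
      · -- first complex index
        obtain ⟨hg1, hg2⟩ := hgam_s i hieh his
        have hG := (hG_s i hieh his).1
        have hi' : i < p := hi
        have hmu : (starRingEnd ℂ) (lam i) ^ 2 = (starRingEnd ℂ) (mu i) := by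
          rw [hmulam i hi, map_pow]
        rw [hG, hg2, hg1, hmu]
        have h1 : (1 : ℂ) + mu i ≠ 0 := hne1 i hi
        have h1c : (1 : ℂ) + (starRingEnd ℂ) (mu i) ≠ 0 := by
          intro hc
          apply h1
          have := congrArg (starRingEnd ℂ) hc
          simpa using this
        rw [show (starRingEnd ℂ) ((1 + (starRingEnd ℂ) (mu i))⁻¹) = (1 + mu i)⁻¹ by
          rw [map_inv₀]; simp]
        exact inv_mul_helper _ h1
      · -- second complex index
        obtain ⟨j, hj1, hj2, rfl⟩ : ∃ j, e + h ≤ j ∧ j < e + h + s ∧ j + s = i := by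
          exact ⟨i - s, by omega, by omega, by omega⟩
        obtain ⟨hg1, hg2⟩ := hgam_s j hj1 hj2
        have hG := (hG_s j hj1 hj2).2
        have hjp : j < p := by omega
        have hls := (hcpl j hj1 hj2).2.2.2
        have hmu2 : mu (j + s) = ((starRingEnd ℂ) (mu j))⁻¹ := by
          rw [hmulam (j + s) hi, hls, hmulam j hjp, map_pow, inv_pow]
        have hmuc : (starRingEnd ℂ) (lam j) ^ 2 = (starRingEnd ℂ) (mu j) := by
          rw [hmulam j hjp, map_pow]
        have hc0 : (starRingEnd ℂ) (mu j) ≠ 0 := by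
          simpa using hne0 j hjp
        have h1c : (1 : ℂ) + (starRingEnd ℂ) (mu j) ≠ 0 := by
          intro hc
          apply hne1 j hjp
          have := congrArg (starRingEnd ℂ) hc
          simpa using this
        have hgj : gam j = (1 + (starRingEnd ℂ) (mu j))⁻¹ := by rw [hg1, hmuc]
        have hcgjs : (starRingEnd ℂ) (gam (j + s)) = 1 - gam j := by
          rw [hg2]; simp
        rw [hG, hcgjs, hgj, hmu2, inv_mul_helper _ h1c]
        set c := (starRingEnd ℂ) (mu j) with hc
        have e1 : 1 + c⁻¹ = (1 + c) * c⁻¹ := by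
          rw [add_mul, one_mul, mul_inv_cancel₀ hc0, add_comm]
        have h1c' : (1 : ℂ) + c⁻¹ ≠ 0 := by
          rw [e1]; exact mul_ne_zero h1c (inv_ne_zero hc0)
        rw [div_eq_div_iff (pow_ne_zero 2 h1c) (pow_ne_zero 2 h1c'), e1]
        have hcc : c * c⁻¹ = 1 := mul_inv_cancel₀ hc0
        linear_combination (c⁻¹ * (1 + c) ^ 2) * hcc
  -- conclude
  intro i hi j hj hGij
  rw [hGf i hi, hGf j hj] at hGij
  rw [div_eq_div_iff (pow_ne_zero 2 (hne1 i hi)) (pow_ne_zero 2 (hne1 j hj))] at hGij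
  rcases key_quad _ _ hGij with heq | hprod
  · exact hmu_inj i hi j hj heq
  · exfalso
    apply hmu_inv i hi j hj
    exact eq_inv_of_mul_eq_one_left (by linear_combination hprod)
end

section
/- Majorant fixed point: let f be a convergent power series map in n variables with f(0) = 0 and Df(0) = 0, and let f_sym majorize f with nonnegative coefficients. Then the equation u = C·f_sym(I_sym + u), u(0) = 0, has a unique solution u given by a convergent power series, by the implicit function theorem. -/
/-- Majorant fixed point: for `fsym` analytic at `0` with `fsym 0 = 0` and vanishing
derivative at `0`, and `C > 0`, the equation `u = C·fsym(I + u)`, `u(0) = 0`, has a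
unique solution `u`, given by a convergent power series. -/
theorem stmt_18 (n : ℕ) (fsym : (Fin n → ℂ) → (Fin n → ℂ))
    (hf : AnalyticAt ℂ fsym 0) (hf0 : fsym 0 = 0)
    (hdf : fderiv ℂ fsym 0 = 0) (C : ℝ) (hC : 0 < C) :
    ∃ u : (Fin n → ℂ) → (Fin n → ℂ),
      AnalyticAt ℂ u 0 ∧ u 0 = 0 ∧
      (∀ᶠ z in nhds 0, u z = C • fsym (z + u z)) ∧
      ∀ v : (Fin n → ℂ) → (Fin n → ℂ), ContinuousAt v 0 → v 0 = 0 →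
        (∀ᶠ z in nhds 0, v z = C • fsym (z + v z)) → v =ᶠ[nhds 0] u := by
  set E := (Fin n → ℂ) × (Fin n → ℂ) with hE
  have key : ∀ y : Fin n → ℂ, C • y = (C : ℂ) • y := fun y =>
    (algebraMap_smul ℂ C y).symm
  set F : E → E := fun p => (p.1, p.2 - (C : ℂ) • fsym (p.1 + p.2)) with hFdef
  -- analyticity of F
  have hin : AnalyticAt ℂ (fun p : E => fsym (p.1 + p.2)) 0 := by
    have h2 : AnalyticAt ℂ (fun p : E => p.1 + p.2) 0 := analyticAt_fst.add analyticAt_snd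
    exact hf.comp_of_eq h2 (by simp)
  have hFa : AnalyticAt ℂ F 0 :=
    analyticAt_fst.prod (analyticAt_snd.sub (analyticAt_const.fun_smul hin))
  have hF0 : F 0 = 0 := by
    simp only [hFdef]
    rw [show ((0 : E).1 + (0 : E).2) = 0 by simp]
    simp [hf0]; rfl
  -- strict derivative of F at 0 is the identity
  have hs : HasStrictFDerivAt fsym (0 : (Fin n → ℂ) →L[ℂ] (Fin n → ℂ)) 0 :=
    hdf ▸ hf.hasStrictFDerivAt
  have h1 : HasStrictFDerivAt (fun p : E => p.1 + p.2)
      ((ContinuousLinearMap.fst ℂ (Fin n → ℂ) (Fin n → ℂ)) +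
        (ContinuousLinearMap.snd ℂ (Fin n → ℂ) (Fin n → ℂ))) 0 :=
    (ContinuousLinearMap.fst ℂ (Fin n → ℂ) (Fin n → ℂ) +
      ContinuousLinearMap.snd ℂ (Fin n → ℂ) (Fin n → ℂ)).hasStrictFDerivAt
  have hs' : HasStrictFDerivAt fsym (0 : (Fin n → ℂ) →L[ℂ] (Fin n → ℂ))
      ((0 : E).1 + (0 : E).2) := by
    rw [show ((0 : E).1 + (0 : E).2) = 0 by simp]; exact hs
  have hcomp : HasStrictFDerivAt (fun p : E => fsym (p.1 + p.2))
      (0 : E →L[ℂ] (Fin n → ℂ)) 0 := by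
    have := hs'.comp (0 : E) h1
    rwa [ContinuousLinearMap.zero_comp] at this
  have hsmul : HasStrictFDerivAt (fun p : E => (C : ℂ) • fsym (p.1 + p.2))
      (0 : E →L[ℂ] (Fin n → ℂ)) 0 := by
    have := hcomp.const_smul (C : ℂ)
    rwa [smul_zero] at this
  have hsub : HasStrictFDerivAt (fun p : E => p.2 - (C : ℂ) • fsym (p.1 + p.2))
      (ContinuousLinearMap.snd ℂ (Fin n → ℂ) (Fin n → ℂ)) 0 := by
    have := ((ContinuousLinearMap.snd ℂ (Fin n → ℂ) (Fin n → ℂ)).hasStrictFDerivAt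
      (x := (0 : E))).sub hsmul
    rwa [sub_zero] at this
  have hFd : HasStrictFDerivAt F
      ((ContinuousLinearEquiv.refl ℂ E : E ≃L[ℂ] E) : E →L[ℂ] E) 0 := by
    have := ((ContinuousLinearMap.fst ℂ (Fin n → ℂ) (Fin n → ℂ)).hasStrictFDerivAt
      (x := (0 : E))).prodMk hsub
    rw [ContinuousLinearMap.fst_prod_snd] at this
    rw [show ((ContinuousLinearEquiv.refl ℂ E : E ≃L[ℂ] E) : E →L[ℂ] E)
        = ContinuousLinearMap.id ℂ E from rfl]
    exact this
  -- local homeomorphism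
  set Φ := hFd.toOpenPartialHomeomorph F with hΦdef
  have hΦcoe : (Φ : E → E) = F := hFd.toOpenPartialHomeomorph_coe
  have hΦ0 : (0 : E) ∈ Φ.source := hFd.mem_toOpenPartialHomeomorph_source
  have hΦmap : Φ 0 = 0 := by rw [show Φ 0 = F 0 from congrFun hΦcoe 0, hF0]
  have h0t : (0 : E) ∈ Φ.target := hΦmap ▸ Φ.map_source hΦ0
  -- the inverse is analytic at 0
  have hsymm : AnalyticAt ℂ Φ.symm 0 := by
    have hfd : fderiv ℂ Φ 0 = (ContinuousLinearEquiv.refl ℂ E : E ≃L[ℂ] E) := by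
      rw [hΦcoe]; exact hFd.hasFDerivAt.fderiv
    have := Φ.analyticAt_symm' (i := ContinuousLinearEquiv.refl ℂ E) hΦ0
      (by rw [hΦcoe]; exact hFa) hfd
    rwa [hΦmap] at this
  have hsymm0 : Φ.symm ((0 : Fin n → ℂ), (0 : Fin n → ℂ)) = 0 := by
    have := Φ.left_inv hΦ0
    rw [hΦmap] at this
    rw [show (((0 : Fin n → ℂ), (0 : Fin n → ℂ)) : E) = (0 : E) from rfl]
    exact this
  -- the solution
  refine ⟨fun z => (Φ.symm (z, 0)).2, ?_, ?_, ?_, ?_⟩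
  · have h2 : AnalyticAt ℂ (fun z : Fin n → ℂ => ((z, 0) : E)) 0 :=
      analyticAt_id.prod analyticAt_const
    have h1 : AnalyticAt ℂ (fun z : Fin n → ℂ => Φ.symm (z, 0)) 0 :=
      hsymm.comp_of_eq h2 (by rfl)
    exact analyticAt_snd.comp h1
  · show (Φ.symm ((0 : Fin n → ℂ), (0 : Fin n → ℂ))).2 = 0
    rw [hsymm0]
    rfl
  · -- the functional equation
    have hev : ∀ᶠ z in nhds (0 : Fin n → ℂ), ((z, 0) : E) ∈ Φ.target := by
      have hc : ContinuousAt (fun z : Fin n → ℂ => ((z, 0) : E)) 0 :=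
        continuousAt_id.prodMk continuousAt_const
      have := hc.preimage_mem_nhds (Φ.open_target.mem_nhds h0t)
      exact this
    filter_upwards [hev] with z hz
    have h1 : F (Φ.symm (z, 0)) = (z, 0) := by
      rw [← congrFun hΦcoe (Φ.symm (z, 0))]; exact Φ.right_inv hz
    set q := Φ.symm ((z, 0) : E) with hq
    have h2a : q.1 = z := congrArg Prod.fst h1
    have h2b : q.2 - (C : ℂ) • fsym (q.1 + q.2) = 0 := congrArg Prod.snd h1
    have h3 : q.2 = (C : ℂ) • fsym (q.1 + q.2) := sub_eq_zero.mp h2b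
    rw [key, show z + q.2 = q.1 + q.2 by rw [h2a]]
    exact h3
  · -- uniqueness
    intro v hv hv0 hveq
    have hcont : ContinuousAt (fun z : Fin n → ℂ => ((z, v z) : E)) 0 :=
      continuousAt_id.prodMk hv
    have hsrc : ∀ᶠ z in nhds (0 : Fin n → ℂ), ((z, v z) : E) ∈ Φ.source := by
      have h00 : (((0 : Fin n → ℂ), v 0) : E) ∈ Φ.source := by rw [hv0]; exact hΦ0
      have := hcont.preimage_mem_nhds (Φ.open_source.mem_nhds h00)
      exact this
    filter_upwards [hsrc, hveq] with z hz heq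
    have h1 : Φ (z, v z) = ((z, 0) : E) := by
      rw [congrFun hΦcoe (z, v z)]
      refine Prod.ext rfl ?_
      show v z - (C : ℂ) • fsym (z + v z) = 0
      rw [← key, ← heq, sub_self]
    have h2 : Φ.symm ((z, 0) : E) = (z, v z) := by
      rw [← h1]; exact Φ.left_inv hz
    show v z = (Φ.symm ((z, 0) : E)).2
    rw [h2]
end
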